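/- Let n ≥ 2, θ > 0, and p ∈ Δ_n with p_i > 0 for all i. For every closed subset B of S_n, limsup_{γ→0+} γ log Π_{θ,γ,p}(B) ≤ −θ inf_{x∈B} Σ_{i=1}^n p_i log(p_i/x_i), where for x ∈ S_n we set x_n = 1 − Σ_{i=1}^{n-1} x_i and the infimum over the empty set is +∞ (a term p_i log(p_i/x_i) is +∞ when x_i = 0). -/

import Mathlib

open MeasureTheory Filter
open scoped ENNReal NNReal Classical

/-- The simplex `S_n = {x ∈ ℝ^{n-1} : x_i ≥ 0, ∑ x_i ≤ 1}`. -/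
def Sn (n : ℕ) : Set (Fin (n - 1) → ℝ) :=
  {x | (∀ i, 0 ≤ x i) ∧ ∑ i, x i ≤ 1}

/-- For `x ∈ ℝ^{n-1}`, the extended coordinates `(x_1, …, x_{n-1}, 1 - ∑ x_i)`
indexed by `Fin n`. -/
noncomputable def xext (n : ℕ) (x : Fin (n - 1) → ℝ) (i : Fin n) : ℝ :=
  if h : (i : ℕ) < n - 1 then x ⟨i, h⟩ else 1 - ∑ j, x j

/-- The Dirichlet distribution `Π_{θ,γ,p}` on `S_n`: the measure with density
`Γ(γ⁻¹θ)/∏ Γ(γ⁻¹θ pᵢ) · ∏ xᵢ^{γ⁻¹θ pᵢ - 1}` (with `x_n = 1 - ∑_{i<n} x_i`)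
with respect to Lebesgue measure on `ℝ^{n-1}`, supported on `S_n`. -/
noncomputable def dirichletS (n : ℕ) (θ γ : ℝ) (p : Fin n → ℝ) :
    Measure (Fin (n - 1) → ℝ) :=
  volume.withDensity ((Sn n).indicator fun x =>
    ENNReal.ofReal ((Real.Gamma (θ / γ) / ∏ i, Real.Gamma (θ * p i / γ)) *
      ∏ i, xext n x i ^ (θ * p i / γ - 1)))

/-- The cost `∑_{i=1}^n pᵢ log (pᵢ / xᵢ)` of a point `x ∈ S_n`, a summand being `+∞`
when `xᵢ = 0` (and `pᵢ > 0`). -/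
noncomputable def entCost (n : ℕ) (p : Fin n → ℝ) (x : Fin (n - 1) → ℝ) : EReal :=
  ∑ i, if xext n x i = 0 then (⊤ : EReal)
    else ((p i * Real.log (p i / xext n x i) : ℝ) : EReal)

private lemma ereal_coe_sum {ι : Type*} (s : Finset ι) (f : ι → ℝ) :
    ((∑ i ∈ s, f i : ℝ) : EReal) = ∑ i ∈ s, ((f i : ℝ) : EReal) :=
  map_sum (⟨⟨Real.toEReal, EReal.coe_zero⟩, EReal.coe_add⟩ : ℝ →+ EReal) f s

/-- Elementary Stirling-type upper bound: `log Γ(z) ≤ z log z - z + 1` for `z ≥ 2`. -/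
private lemma log_gamma_upper {z : ℝ} (hz : 2 ≤ z) :
    Real.log (Real.Gamma z) ≤ z * Real.log z - z + 1 := by
  have hz0 : (0:ℝ) < z := by linarith
  have hz1 : (0:ℝ) ≤ z - 1 := by linarith
  set C : ℝ := z ^ (z - 1) * Real.exp (-(z - 1)) with hC
  have hCpos : 0 < C := mul_pos (Real.rpow_pos_of_pos hz0 _) (Real.exp_pos _)
  have key : Real.Gamma z ≤ C * z := by
    rw [Real.Gamma_eq_integral hz0]
    have hb : (0:ℝ) < 1 / z := by positivity
    have hint2 : IntegrableOn (fun t : ℝ => C * Real.exp (-(1/z) * t)) (Set.Ioi 0) :=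
      (exp_neg_integrableOn_Ioi 0 hb).const_mul C
    have hmono : ∀ t ∈ Set.Ioi (0:ℝ),
        Real.exp (-t) * t ^ (z - 1) ≤ C * Real.exp (-(1/z) * t) := by
      intro t ht
      have ht0 : (0:ℝ) < t := ht
      have hlog : Real.log t ≤ Real.log z + (t / z - 1) := by
        have h := Real.log_le_sub_one_of_pos (show (0:ℝ) < t / z by positivity)
        rw [Real.log_div (ne_of_gt ht0) (ne_of_gt hz0)] at h
        linarith
      have hexp : -t + (z - 1) * Real.log t ≤
          (z - 1) * Real.log z - (z - 1) + (-(1/z) * t) := by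
        have h2 := mul_le_mul_of_nonneg_left hlog hz1
        have hzz : (z - 1) * (t / z) - t = -(1/z) * t := by
          field_simp
          ring
        nlinarith [h2]
      calc Real.exp (-t) * t ^ (z - 1)
          = Real.exp (-t + (z - 1) * Real.log t) := by
            rw [Real.exp_add, Real.rpow_def_of_pos ht0, mul_comm (Real.log t) (z-1)]
        _ ≤ Real.exp ((z - 1) * Real.log z - (z - 1) + (-(1/z) * t)) := Real.exp_le_exp.2 hexp
        _ = C * Real.exp (-(1/z) * t) := by
            rw [hC, Real.rpow_def_of_pos hz0, ← Real.exp_add, ← Real.exp_add,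
              mul_comm (Real.log z) (z-1)]
            ring_nf
    calc (∫ t in Set.Ioi (0:ℝ), Real.exp (-t) * t ^ (z - 1))
        ≤ ∫ t in Set.Ioi (0:ℝ), C * Real.exp (-(1/z) * t) :=
          setIntegral_mono_on (Real.GammaIntegral_convergent hz0) hint2
            measurableSet_Ioi hmono
      _ = C * z := by
          rw [MeasureTheory.integral_const_mul]
          have : (∫ t in Set.Ioi (0:ℝ), Real.exp (-(1/z) * t))
              = (1/z)⁻¹ • ∫ t in Set.Ioi ((1/z) * 0), Real.exp (-t) := by
            rw [← integral_comp_mul_left_Ioi (fun u => Real.exp (-u)) 0 hb]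
            simp [neg_mul]
          rw [this]
          rw [mul_zero, integral_exp_neg_Ioi_zero, smul_eq_mul, mul_one, one_div, inv_inv]
  have hgz := Real.Gamma_pos_of_pos hz0
  have := Real.log_le_log hgz key
  rw [Real.log_mul (ne_of_gt hCpos) (ne_of_gt hz0), hC,
    Real.log_mul (ne_of_gt (Real.rpow_pos_of_pos hz0 _)) (ne_of_gt (Real.exp_pos _)),
    Real.log_rpow hz0, Real.log_exp] at this
  linarith

/-- Elementary Stirling-type lower bound: `(z-1) log (z-1) - z ≤ log Γ(z)` for `z ≥ 2`. -/
private lemma log_gamma_lower {z : ℝ} (hz : 2 ≤ z) :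
    (z - 1) * Real.log (z - 1) - z ≤ Real.log (Real.Gamma z) := by
  have hz0 : (0:ℝ) < z := by linarith
  have hz1 : (0:ℝ) < z - 1 := by linarith
  set c : ℝ := Real.exp (-z) * (z - 1) ^ (z - 1) with hc
  have hcpos : 0 < c := mul_pos (Real.exp_pos _) (Real.rpow_pos_of_pos hz1 _)
  have key : c ≤ Real.Gamma z := by
    rw [Real.Gamma_eq_integral hz0]
    have hIoc : Set.Ioc (z-1) z ⊆ Set.Ioi (0:ℝ) := fun t ht => lt_trans hz1 ht.1
    have hint : IntegrableOn (fun t : ℝ => Real.exp (-t) * t ^ (z - 1)) (Set.Ioc (z-1) z) :=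
      (Real.GammaIntegral_convergent hz0).mono_set hIoc
    have step1 : c ≤ ∫ t in Set.Ioc (z-1) z, Real.exp (-t) * t ^ (z - 1) := by
      have hconst : IntegrableOn (fun _ : ℝ => c) (Set.Ioc (z-1) z) := by
        apply integrableOn_const ?_
        rw [Real.volume_Ioc]
        exact ENNReal.ofReal_ne_top
      have hptwise : ∀ t ∈ Set.Ioc (z-1) z, c ≤ Real.exp (-t) * t ^ (z - 1) := by
        intro t ht
        have h1 : Real.exp (-z) ≤ Real.exp (-t) := Real.exp_le_exp.2 (by linarith [ht.2])
        have h2 : (z-1) ^ (z-1) ≤ t ^ (z-1) :=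
          Real.rpow_le_rpow (le_of_lt hz1) (le_of_lt ht.1) (le_of_lt hz1)
        exact mul_le_mul h1 h2 (le_of_lt (Real.rpow_pos_of_pos hz1 _))
          (le_of_lt (Real.exp_pos _))
      have h := setIntegral_mono_on hconst hint measurableSet_Ioc hptwise
      rwa [setIntegral_const, measureReal_def, Real.volume_Ioc, (by ring : z - (z-1) = 1),
        ENNReal.toReal_ofReal (by norm_num : (0:ℝ) ≤ 1), one_smul] at h
    have step2 : (∫ t in Set.Ioc (z-1) z, Real.exp (-t) * t ^ (z-1))
        ≤ ∫ t in Set.Ioi (0:ℝ), Real.exp (-t) * t ^ (z-1) := by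
      apply setIntegral_mono_set (Real.GammaIntegral_convergent hz0) ?_
        (HasSubset.Subset.eventuallyLE hIoc)
      filter_upwards [ae_restrict_mem measurableSet_Ioi] with t ht
      have ht0 : (0:ℝ) < t := ht
      positivity
    linarith
  calc (z-1) * Real.log (z-1) - z = Real.log c := by
        rw [hc, Real.log_mul (ne_of_gt (Real.exp_pos _))
          (ne_of_gt (Real.rpow_pos_of_pos hz1 _)), Real.log_exp, Real.log_rpow hz1]
        ring
    _ ≤ Real.log (Real.Gamma z) := Real.log_le_log hcpos key

private lemma tendsto_F :
    Tendsto (fun z : ℝ => (Real.log (Real.Gamma z) - z * Real.log z + z) / z)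
      atTop (nhds 0) := by
  have hlogdiv : Tendsto (fun z : ℝ => Real.log z / z) atTop (nhds 0) := by
    have := Real.isLittleO_log_id_atTop.tendsto_div_nhds_zero
    simpa using this
  have hinv : Tendsto (fun z : ℝ => 1 / z) atTop (nhds 0) := by
    simpa using tendsto_inv_atTop_zero (𝕜 := ℝ)
  have hlow : Tendsto (fun z : ℝ => -(Real.log z / z) - 1/z) atTop (nhds 0) := by
    have := (hlogdiv.neg).sub hinv
    simpa using this
  apply tendsto_of_tendsto_of_tendsto_of_le_of_le' hlow hinv
  · -- lower bound eventually
    filter_upwards [eventually_ge_atTop (2:ℝ)] with z hz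
    have hz0 : (0:ℝ) < z := by linarith
    have hz1 : (0:ℝ) < z - 1 := by linarith
    have hB := log_gamma_lower hz
    have hgap : z * Real.log z - (z-1) * Real.log (z-1) ≤ Real.log z + 1 := by
      have hq : Real.log z - Real.log (z-1) ≤ 1/(z-1) := by
        have h := Real.log_le_sub_one_of_pos (show (0:ℝ) < z/(z-1) by positivity)
        rw [Real.log_div (ne_of_gt hz0) (ne_of_gt hz1)] at h
        have : z/(z-1) - 1 = 1/(z-1) := by field_simp; ring
        linarith
      have h2 : (z-1) * (Real.log z - Real.log (z-1)) ≤ 1 := by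
        have := mul_le_mul_of_nonneg_left hq (le_of_lt hz1)
        have h3 : (z-1) * (1/(z-1)) = 1 := by field_simp
        linarith
      nlinarith
    have hnum : -(Real.log z) - 1 ≤ Real.log (Real.Gamma z) - z * Real.log z + z := by
      linarith
    have hd : (-(Real.log z) - 1) / z ≤ (Real.log (Real.Gamma z) - z * Real.log z + z) / z :=
      (div_le_div_iff_of_pos_right hz0).2 hnum
    have heq : (-(Real.log z) - 1) / z = -(Real.log z / z) - 1/z := by
      rw [sub_div, neg_div]
    linarith [hd, heq ▸ hd]
  · -- upper bound eventually
    filter_upwards [eventually_ge_atTop (2:ℝ)] with z hz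
    have hz0 : (0:ℝ) < z := by linarith
    have hA := log_gamma_upper hz
    have hnum : Real.log (Real.Gamma z) - z * Real.log z + z ≤ 1 := by linarith
    calc (Real.log (Real.Gamma z) - z * Real.log z + z) / z ≤ 1 / z :=
      (div_le_div_iff_of_pos_right hz0).2 hnum

private lemma tendsto_gammaTerm {a : ℝ} (ha : 0 < a) :
    Tendsto (fun γ : ℝ => γ * Real.log (Real.Gamma (a/γ)) - a * Real.log a
        + a * Real.log γ + a)
      (nhdsWithin 0 (Set.Ioi 0)) (nhds 0) := by
  have hT1 : Tendsto (fun γ : ℝ => a/γ) (nhdsWithin 0 (Set.Ioi 0)) atTop := by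
    simp only [div_eq_mul_inv]
    exact tendsto_inv_nhdsGT_zero.const_mul_atTop ha
  have hcomp := tendsto_F.comp hT1
  have hmul := hcomp.const_mul a
  rw [mul_zero] at hmul
  apply hmul.congr'
  filter_upwards [self_mem_nhdsWithin] with γ (hγ : 0 < γ)
  have hγ0 : γ ≠ 0 := ne_of_gt hγ
  have ha0 : a ≠ 0 := ne_of_gt ha
  have hw : (0:ℝ) < a / γ := by positivity
  simp only [Function.comp]
  rw [Real.log_div ha0 hγ0]
  field_simp
  ring

private lemma tendsto_normalizer {n : ℕ} {θ : ℝ} (hθ : 0 < θ)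
    {p : Fin n → ℝ} (hp : ∀ i, 0 < p i) (hsum : ∑ i, p i = 1) :
    Tendsto (fun γ : ℝ =>
        γ * Real.log (Real.Gamma (θ/γ) / ∏ i, Real.Gamma (θ * p i / γ)))
      (nhdsWithin 0 (Set.Ioi 0))
      (nhds (-(θ * ∑ i, p i * Real.log (p i)))) := by
  set S : ℝ := ∑ i, p i * Real.log (p i) with hS
  have hA := tendsto_gammaTerm hθ
  have hB : Tendsto (fun γ : ℝ => ∑ i, (γ * Real.log (Real.Gamma ((θ * p i)/γ))
      - (θ * p i) * Real.log (θ * p i) + (θ * p i) * Real.log γ + (θ * p i)))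
      (nhdsWithin 0 (Set.Ioi 0)) (nhds 0) := by
    have := tendsto_finset_sum (Finset.univ : Finset (Fin n))
      (fun i _ => tendsto_gammaTerm (mul_pos hθ (hp i)))
    simpa using this
  have hcomb := (hA.sub hB).add_const (-(θ * S))
  rw [sub_zero, zero_add] at hcomb
  apply hcomb.congr'
  filter_upwards [self_mem_nhdsWithin] with γ (hγ : 0 < γ)
  have hγ0 : γ ≠ 0 := ne_of_gt hγ
  have hGpos : ∀ i : Fin n, 0 < Real.Gamma (θ * p i / γ) := fun i =>
    Real.Gamma_pos_of_pos (by have := hp i; positivity)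
  have hGne : ∀ i ∈ Finset.univ, Real.Gamma (θ * p i / γ) ≠ 0 :=
    fun i _ => ne_of_gt (hGpos i)
  have hprodpos : 0 < ∏ i, Real.Gamma (θ * p i / γ) := Finset.prod_pos fun i _ => hGpos i
  have hG0 : 0 < Real.Gamma (θ/γ) := Real.Gamma_pos_of_pos (by positivity)
  rw [Real.log_div (ne_of_gt hG0) (ne_of_gt hprodpos), Real.log_prod hGne]
  have h1 : ∑ i, θ * p i * Real.log γ = θ * Real.log γ := by
    have : ∀ i : Fin n, θ * p i * Real.log γ = (θ * Real.log γ) * p i := fun i => by ring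
    rw [Finset.sum_congr rfl fun i _ => this i, ← Finset.mul_sum, hsum, mul_one]
  have h2 : ∑ i : Fin n, θ * p i = θ := by
    rw [← Finset.mul_sum, hsum, mul_one]
  have h3 : ∑ i, θ * p i * Real.log (θ * p i) = θ * Real.log θ + θ * S := by
    have hterm : ∀ i : Fin n, θ * p i * Real.log (θ * p i)
        = (θ * Real.log θ) * p i + θ * (p i * Real.log (p i)) := fun i => by
      rw [Real.log_mul (ne_of_gt hθ) (ne_of_gt (hp i))]; ring
    rw [Finset.sum_congr rfl fun i _ => hterm i, Finset.sum_add_distrib,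
      ← Finset.mul_sum, ← Finset.mul_sum, hsum, mul_one, hS]
  have hexp : ∑ i, (γ * Real.log (Real.Gamma ((θ * p i)/γ))
      - (θ * p i) * Real.log (θ * p i) + (θ * p i) * Real.log γ + (θ * p i))
      = (∑ i, γ * Real.log (Real.Gamma ((θ * p i)/γ)))
        - (θ * Real.log θ + θ * S) + θ * Real.log γ + θ := by
    rw [Finset.sum_add_distrib, Finset.sum_add_distrib, Finset.sum_sub_distrib, h1, h2, h3]
  have hmulsum : γ * ∑ i, Real.log (Real.Gamma (θ * p i / γ))
      = ∑ i, γ * Real.log (Real.Gamma ((θ * p i)/γ)) := by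
    rw [Finset.mul_sum]
  rw [mul_sub, hmulsum]
  rw [hexp]
  ring

private lemma xext_mem {n : ℕ} {x : Fin (n-1) → ℝ} (hx : x ∈ Sn n) (i : Fin n) :
    0 ≤ xext n x i ∧ xext n x i ≤ 1 := by
  obtain ⟨h0, h1⟩ := hx
  unfold xext
  by_cases h : (i : ℕ) < n - 1
  · rw [dif_pos h]
    refine ⟨h0 _, ?_⟩
    calc x ⟨i, h⟩ ≤ ∑ j, x j :=
          Finset.single_le_sum (fun j _ => h0 j) (Finset.mem_univ _)
      _ ≤ 1 := h1
  · rw [dif_neg h]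
    have hs : 0 ≤ ∑ j, x j := Finset.sum_nonneg fun j _ => h0 j
    constructor <;> linarith

private lemma continuous_xext (n : ℕ) (i : Fin n) :
    Continuous fun x : Fin (n-1) → ℝ => xext n x i := by
  unfold xext
  by_cases h : (i : ℕ) < n - 1
  · simp only [dif_pos h]; exact continuous_apply _
  · simp only [dif_neg h]
    exact continuous_const.sub (continuous_finset_sum _ fun j _ => continuous_apply j)

private lemma continuous_phi (n : ℕ) (p : Fin n → ℝ) (hp : ∀ i, 0 < p i) :
    Continuous fun x : Fin (n-1) → ℝ => ∏ i, xext n x i ^ p i := by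
  apply continuous_finset_prod
  intro i _
  have hc : Continuous fun t : ℝ => t ^ p i := by
    rw [continuous_iff_continuousAt]
    intro t
    exact Real.continuousAt_rpow_const t (p i) (Or.inr (le_of_lt (hp i)))
  exact hc.comp (continuous_xext n i)

theorem dirichlet_LDP_upper (n : ℕ) (hn : 2 ≤ n) (θ : ℝ) (hθ : 0 < θ)
    (p : Fin n → ℝ) (hp : ∀ i, 0 < p i) (hsum : ∑ i, p i = 1)
    (B : Set (Fin (n - 1) → ℝ)) (hBS : B ⊆ Sn n) (hB : IsClosed B) :
    limsup (fun γ : ℝ => (γ : EReal) * ENNReal.log (dirichletS n θ γ p B))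
        (nhdsWithin 0 (Set.Ioi 0)) ≤
      -((θ : EReal) * ⨅ x ∈ B, entCost n p x) := by
  classical
  set F := nhdsWithin (0:ℝ) (Set.Ioi 0) with hF
  have hne : (Finset.univ : Finset (Fin n)).Nonempty := ⟨⟨0, by omega⟩, Finset.mem_univ _⟩
  obtain ⟨i₀, -, hmin⟩ := Finset.exists_min_image Finset.univ p hne
  set m : ℝ := p i₀ with hm
  have hm0 : 0 < m := hp i₀
  have hmle : ∀ i, m ≤ p i := fun i => hmin i (Finset.mem_univ i)
  set γ₁ : ℝ := θ * m with hγ₁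
  have hγ₁0 : 0 < γ₁ := mul_pos hθ hm0
  have hIoo : Set.Ioo (0:ℝ) γ₁ ∈ F := Ioo_mem_nhdsGT_of_mem ⟨le_refl 0, hγ₁0⟩
  set φ : (Fin (n-1) → ℝ) → ℝ := fun x => ∏ i, xext n x i ^ p i with hφ
  have hφcont : Continuous φ := continuous_phi n p hp
  have hφnonneg : ∀ x, x ∈ Sn n → 0 ≤ φ x := fun x hx =>
    Finset.prod_nonneg fun i _ => Real.rpow_nonneg (xext_mem hx i).1 _
  have hBIcc : B ⊆ Set.Icc (0 : Fin (n-1) → ℝ) 1 := by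
    intro x hx
    obtain hx' := hBS hx
    refine ⟨fun i => hx'.1 i, fun i => ?_⟩
    calc x i ≤ ∑ j, x j :=
          Finset.single_le_sum (fun j _ => hx'.1 j) (Finset.mem_univ _)
      _ ≤ 1 := hx'.2
  have hvolB : volume B ≤ 1 := by
    calc volume B ≤ volume (Set.Icc (0 : Fin (n-1) → ℝ) 1) := measure_mono hBIcc
      _ = 1 := by
        rw [Real.volume_Icc_pi]
        simp
  have hβpos : ∀ γ ∈ Set.Ioo (0:ℝ) γ₁, 0 < θ/γ - 1/m := by
    intro γ hγ
    rw [sub_pos, div_lt_div_iff₀ hm0 hγ.1]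
    have := hγ.2
    rw [hγ₁] at this
    linarith
  have hGpos : ∀ γ : ℝ, 0 < γ → ∀ i : Fin n, 0 < Real.Gamma (θ * p i / γ) := fun γ hγ i =>
    Real.Gamma_pos_of_pos (by have := hp i; positivity)
  have hCpos : ∀ γ : ℝ, 0 < γ →
      0 < Real.Gamma (θ/γ) / ∏ i, Real.Gamma (θ * p i / γ) := fun γ hγ =>
    div_pos (Real.Gamma_pos_of_pos (by positivity))
      (Finset.prod_pos fun i _ => hGpos γ hγ i)
  -- key measure bound
  have key : ∀ R : ℝ, 0 ≤ R → (∀ x ∈ B, φ x ≤ R) → ∀ γ ∈ Set.Ioo (0:ℝ) γ₁,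
      dirichletS n θ γ p B ≤ ENNReal.ofReal
        ((Real.Gamma (θ/γ) / ∏ i, Real.Gamma (θ * p i / γ)) * R ^ (θ/γ - 1/m)) := by
    intro R hR0 hRB γ hγ
    obtain ⟨hγ0, hγlt⟩ := hγ
    have hβ0 : 0 < θ/γ - 1/m := hβpos γ ⟨hγ0, hγlt⟩
    set β : ℝ := θ/γ - 1/m with hβ
    set C : ℝ := Real.Gamma (θ/γ) / ∏ i, Real.Gamma (θ * p i / γ) with hC
    have hCp : 0 < C := hCpos γ hγ0
    have hdens : ∀ x ∈ B, (Sn n).indicator (fun x =>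
        ENNReal.ofReal (C * ∏ i, xext n x i ^ (θ * p i / γ - 1))) x
        ≤ ENNReal.ofReal (C * R ^ β) := by
      intro x hxB
      have hx := hBS hxB
      rw [Set.indicator_of_mem hx]
      apply ENNReal.ofReal_le_ofReal
      apply mul_le_mul_of_nonneg_left _ (le_of_lt hCp)
      have hstep1 : ∀ i : Fin n, xext n x i ^ (θ * p i / γ - 1) ≤ (xext n x i ^ p i) ^ β := by
        intro i
        rw [← Real.rpow_mul (xext_mem hx i).1]
        have hexp : p i * β ≤ θ * p i / γ - 1 := by
          have h1 : 1 ≤ p i / m := (one_le_div hm0).2 (hmle i)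
          have h2 : p i * β = θ * p i / γ - p i / m := by rw [hβ]; ring
          linarith
        have hexp0 : 0 < p i * β := mul_pos (hp i) hβ0
        rcases eq_or_lt_of_le (xext_mem hx i).1 with h0 | h0
        · rw [← h0, Real.zero_rpow (ne_of_gt (lt_of_lt_of_le hexp0 hexp)),
            Real.zero_rpow (ne_of_gt hexp0)]
        · exact Real.rpow_le_rpow_of_exponent_ge h0 (xext_mem hx i).2 hexp
      calc ∏ i, xext n x i ^ (θ * p i / γ - 1)
          ≤ ∏ i, (xext n x i ^ p i) ^ β :=
            Finset.prod_le_prod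
              (fun i _ => Real.rpow_nonneg (xext_mem hx i).1 _)
              (fun i _ => hstep1 i)
        _ = (φ x) ^ β := by
            rw [Real.finset_prod_rpow _ _
              (fun i _ => Real.rpow_nonneg (xext_mem hx i).1 _)]
        _ ≤ R ^ β := Real.rpow_le_rpow (hφnonneg x hx) (hRB x hxB) (le_of_lt hβ0)
    calc dirichletS n θ γ p B
        = ∫⁻ x in B, (Sn n).indicator (fun x =>
            ENNReal.ofReal (C * ∏ i, xext n x i ^ (θ * p i / γ - 1))) x ∂volume :=
          withDensity_apply _ hB.measurableSet
      _ ≤ ∫⁻ _x in B, ENNReal.ofReal (C * R ^ β) ∂volume :=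
          setLIntegral_mono' hB.measurableSet hdens
      _ = ENNReal.ofReal (C * R ^ β) * volume B := setLIntegral_const _ _
      _ ≤ ENNReal.ofReal (C * R ^ β) * 1 := mul_le_mul_right hvolB _
      _ = ENNReal.ofReal (C * R ^ β) := mul_one _
  rcases Set.eq_empty_or_nonempty B with hBe | hBne
  · subst hBe
    have hev : ∀ᶠ γ : ℝ in F, (γ:EReal) * ENNReal.log (dirichletS n θ γ p ∅) = (⊥ : EReal) := by
      filter_upwards [hIoo] with γ hγ
      rw [measure_empty, ENNReal.log_zero, EReal.coe_mul_bot_of_pos hγ.1]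
    exact le_trans (limsup_le_of_le (h := hev.mono fun γ h => le_of_eq h)) bot_le
  · have hBcomp : IsCompact B := IsCompact.of_isClosed_subset isCompact_Icc hB hBIcc
    obtain ⟨x₀, hx₀B, hx₀max⟩ := hBcomp.exists_isMaxOn hBne hφcont.continuousOn
    set R : ℝ := φ x₀ with hR
    have hRB : ∀ x ∈ B, φ x ≤ R := fun x hx => hx₀max hx
    have hR0 : 0 ≤ R := hφnonneg x₀ (hBS hx₀B)
    rcases eq_or_lt_of_le hR0 with hR0' | hRpos
    · -- R = 0 : the measure of B vanishes for small γ
      have hev : ∀ᶠ γ : ℝ in F, (γ:EReal) * ENNReal.log (dirichletS n θ γ p B) = (⊥ : EReal) := by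
        filter_upwards [hIoo] with γ hγ
        have h := key R hR0 hRB γ hγ
        rw [← hR0', Real.zero_rpow (ne_of_gt (hβpos γ hγ)), mul_zero,
          ENNReal.ofReal_zero] at h
        rw [le_zero_iff.1 h, ENNReal.log_zero, EReal.coe_mul_bot_of_pos hγ.1]
      exact le_trans (limsup_le_of_le (h := hev.mono fun γ h => le_of_eq h)) bot_le
    · -- R > 0
      have hx₀S := hBS hx₀B
      have hx₀pos : ∀ i, 0 < xext n x₀ i := by
        intro i
        rcases eq_or_lt_of_le (xext_mem hx₀S i).1 with h0 | h0
        · exfalso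
          have hzero : φ x₀ = 0 := Finset.prod_eq_zero (Finset.mem_univ i)
            (by rw [← h0, Real.zero_rpow (ne_of_gt (hp i))])
          rw [← hR] at hzero
          exact absurd hzero.symm (ne_of_lt hRpos)
        · exact h0
      set S : ℝ := ∑ i, p i * Real.log (p i) with hSdef
      have hlogR : Real.log R = ∑ i, p i * Real.log (xext n x₀ i) := by
        rw [hR, hφ, Real.log_prod
          (fun i _ => ne_of_gt (Real.rpow_pos_of_pos (hx₀pos i) _))]
        exact Finset.sum_congr rfl fun i _ => Real.log_rpow (hx₀pos i) _
      set K : ℝ := S - Real.log R with hK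
      have hcost : entCost n p x₀ = (K : EReal) := by
        rw [entCost, Finset.sum_congr rfl (fun i _ => if_neg (ne_of_gt (hx₀pos i)))]
        rw [← ereal_coe_sum]
        have : K = ∑ i, p i * Real.log (p i / xext n x₀ i) := by
          rw [hK, hSdef, hlogR, ← Finset.sum_sub_distrib]
          exact Finset.sum_congr rfl fun i _ => by
            rw [Real.log_div (ne_of_gt (hp i)) (ne_of_gt (hx₀pos i))]; ring
        rw [this]
      have hInf : (⨅ x ∈ B, entCost n p x) ≤ (K : EReal) := by
        rw [← hcost]; exact iInf₂_le x₀ hx₀B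
      have hRHS : ((-(θ*K) : ℝ) : EReal) ≤ -((θ : EReal) * ⨅ x ∈ B, entCost n p x) := by
        rw [EReal.coe_neg, EReal.coe_mul]
        exact EReal.neg_le_neg_iff.2
          (mul_le_mul_of_nonneg_left hInf (by exact_mod_cast le_of_lt hθ))
      refine le_trans ?_ hRHS
      set g : ℝ → ℝ := fun γ =>
        γ * Real.log (Real.Gamma (θ/γ) / ∏ i, Real.Gamma (θ * p i / γ))
          + (θ - γ/m) * Real.log R with hg
      have hgT : Tendsto g F (nhds (-(θ*K))) := by
        have h1 := tendsto_normalizer hθ hp hsum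
        have h2 : Tendsto (fun γ : ℝ => (θ - γ/m) * Real.log R) F
            (nhds (θ * Real.log R)) := by
          have hcont : Continuous (fun γ : ℝ => (θ - γ/m) * Real.log R) := by fun_prop
          have h0 : Tendsto (fun γ : ℝ => (θ - γ/m) * Real.log R) F
              (nhds ((θ - 0/m) * Real.log R)) :=
            (hcont.tendsto 0).mono_left nhdsWithin_le_nhds
          simpa using h0
        have h3 := h1.add h2
        convert h3 using 2
        rw [hK, hSdef]
        ring
      have hev : ∀ᶠ γ : ℝ in F,
          (γ:EReal) * ENNReal.log (dirichletS n θ γ p B) ≤ ((g γ : ℝ) : EReal) := by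
        filter_upwards [hIoo] with γ hγ
        obtain ⟨hγ0, hγlt⟩ := hγ
        have hβ0 : 0 < θ/γ - 1/m := hβpos γ ⟨hγ0, hγlt⟩
        set β : ℝ := θ/γ - 1/m with hβ
        set C : ℝ := Real.Gamma (θ/γ) / ∏ i, Real.Gamma (θ * p i / γ) with hC
        have hCp : 0 < C := hCpos γ hγ0
        have hkey := key R hR0 hRB γ ⟨hγ0, hγlt⟩
        have hpos : 0 < C * R ^ β := mul_pos hCp (Real.rpow_pos_of_pos hRpos β)
        have hlog1 : ENNReal.log (dirichletS n θ γ p B)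
            ≤ ((Real.log (C * R ^ β) : ℝ) : EReal) := by
          have h := ENNReal.log_monotone hkey
          rwa [ENNReal.log_ofReal, if_neg (not_le.2 hpos)] at h
        calc (γ:EReal) * ENNReal.log (dirichletS n θ γ p B)
            ≤ (γ:EReal) * ((Real.log (C * R ^ β) : ℝ) : EReal) :=
              mul_le_mul_of_nonneg_left hlog1 (by exact_mod_cast le_of_lt hγ0)
          _ = ((γ * Real.log (C * R ^ β) : ℝ) : EReal) := (EReal.coe_mul _ _).symm
          _ = ((g γ : ℝ) : EReal) := by
              norm_cast
              rw [Real.log_mul (ne_of_gt hCp)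
                (ne_of_gt (Real.rpow_pos_of_pos hRpos β)), Real.log_rpow hRpos, hg]
              have hγne : γ ≠ 0 := ne_of_gt hγ0
              rw [hβ, hC]
              field_simp
      calc limsup (fun γ : ℝ => (γ : EReal) * ENNReal.log (dirichletS n θ γ p B)) F
          ≤ limsup (fun γ : ℝ => ((g γ : ℝ) : EReal)) F := limsup_le_limsup hev
        _ = ((-(θ*K) : ℝ) : EReal) := Tendsto.limsup_eq (EReal.tendsto_coe.2 hgT)
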